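/- Let G=(V,E) with edge probabilities p(e)∈[0,1], q≥1, and let p'(e)=p(e)/q. Then the Erdős–Rényi distribution ER(G;p') is stochastically dominated by the random cluster distribution RC(G;q,p): there is a coupling (A,A') with A~ER(G;p'), A'~RC(G;q,p), and A⊆A' almost surely. -/

import Mathlib

open scoped Classical

/-- Number of connected components of the graph `(V, F)`. -/
noncomputable def kappa {V : Type*} [Fintype V] (F : Finset (Finset V)) : ℕ :=
  Nat.card (Quotient (Relation.EqvGen.setoid (fun u v : V => ∃ f ∈ F, u ∈ f ∧ v ∈ f)))

lemma nat_card_le_of_almost_inj {α β : Type*} [Finite α] [Finite β] (f : α → β) (a₀ : α)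
    (h : ∀ x y, x ≠ a₀ → y ≠ a₀ → f x = f y → x = y) :
    Nat.card α ≤ Nat.card β + 1 := by
  cases nonempty_fintype α; cases nonempty_fintype β
  rw [Nat.card_eq_fintype_card, Nat.card_eq_fintype_card]
  have h1 : (Finset.univ.erase a₀).card ≤ Fintype.card β := by
    apply Finset.card_le_card_of_injOn f (fun x _ => Finset.mem_univ _)
    intro x hx y hy hxy
    exact h x y (Finset.ne_of_mem_erase hx) (Finset.ne_of_mem_erase hy) hxy
  have h2 := Finset.card_erase_of_mem (Finset.mem_univ a₀)
  have h3 : 0 < Fintype.card α := Fintype.card_pos_iff.mpr ⟨a₀⟩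
  rw [← Finset.card_univ] at h3 ⊢
  omega

lemma kappa_le_insert {V : Type*} [Fintype V] [DecidableEq V] (S : Finset (Finset V)) (e : Finset V)
    (he : e.card = 2) : kappa S ≤ kappa (insert e S) + 1 := by

  obtain ⟨u, v, huv, rfl⟩ := Finset.card_eq_two.mp he
  set R := fun x y : V => ∃ f ∈ S, x ∈ f ∧ y ∈ f with hR
  set R' := fun x y : V => ∃ f ∈ insert ({u, v} : Finset V) S, x ∈ f ∧ y ∈ f with hR'
  have mono : ∀ {a b : V}, Relation.EqvGen R a b → Relation.EqvGen R' a b := by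
    intro a b h
    exact Relation.EqvGen.mono (r := R) (p := R') (fun x y ⟨f, hf, h1, h2⟩ =>
      ⟨f, Finset.mem_insert_of_mem hf, h1, h2⟩) _ _ h
  have key : ∀ a b, Relation.EqvGen R' a b →
      Relation.EqvGen R a b ∨ (Relation.EqvGen R a u ∧ Relation.EqvGen R v b)
        ∨ (Relation.EqvGen R a v ∧ Relation.EqvGen R u b) := by
    intro a b h
    induction h with
    | rel x y hxy =>
      obtain ⟨f, hf, hx, hy⟩ := hxy
      rcases Finset.mem_insert.mp hf with rfl | hf
      · have hx' : x = u ∨ x = v := by simpa using hx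
        have hy' : y = u ∨ y = v := by simpa using hy
        rcases hx' with rfl | rfl <;> rcases hy' with rfl | rfl
        · exact Or.inl (Relation.EqvGen.refl _)
        · exact Or.inr (Or.inl ⟨Relation.EqvGen.refl _, Relation.EqvGen.refl _⟩)
        · exact Or.inr (Or.inr ⟨Relation.EqvGen.refl _, Relation.EqvGen.refl _⟩)
        · exact Or.inl (Relation.EqvGen.refl _)
      · exact Or.inl (Relation.EqvGen.rel _ _ ⟨f, hf, hx, hy⟩)
    | refl x => exact Or.inl (Relation.EqvGen.refl x)
    | symm x y _ ih =>
      rcases ih with h | ⟨h1, h2⟩ | ⟨h1, h2⟩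
      · exact Or.inl (Relation.EqvGen.symm _ _ h)
      · exact Or.inr (Or.inr ⟨Relation.EqvGen.symm _ _ h2, Relation.EqvGen.symm _ _ h1⟩)
      · exact Or.inr (Or.inl ⟨Relation.EqvGen.symm _ _ h2, Relation.EqvGen.symm _ _ h1⟩)
    | trans x y z _ _ ih1 ih2 =>
      have tr : ∀ {a b c : V}, Relation.EqvGen R a b → Relation.EqvGen R b c →
          Relation.EqvGen R a c := fun h1 h2 => Relation.EqvGen.trans _ _ _ h1 h2
      have sy : ∀ {a b : V}, Relation.EqvGen R a b → Relation.EqvGen R b a :=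
        fun h => Relation.EqvGen.symm _ _ h
      rcases ih1 with h | ⟨h1, h2⟩ | ⟨h1, h2⟩ <;>
        rcases ih2 with h' | ⟨h1', h2'⟩ | ⟨h1', h2'⟩
      · exact Or.inl (tr h h')
      · exact Or.inr (Or.inl ⟨tr h h1', h2'⟩)
      · exact Or.inr (Or.inr ⟨tr h h1', h2'⟩)
      · exact Or.inr (Or.inl ⟨h1, tr h2 h'⟩)
      · exact Or.inl (tr h1 (tr (sy (tr h2 h1')) h2'))
      · exact Or.inl (tr h1 h2')
      · exact Or.inr (Or.inr ⟨h1, tr h2 h'⟩)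
      · exact Or.inl (tr h1 h2')
      · exact Or.inl (tr h1 (tr (sy (tr h2 h1')) h2'))
  let s : Setoid V := Relation.EqvGen.setoid R
  let s' : Setoid V := Relation.EqvGen.setoid R'
  let g : Quotient s → Quotient s' :=
    Quotient.lift (fun a => (Quotient.mk s' a)) (fun a b h => Quotient.sound (mono h))
  have : Nat.card (Quotient s) ≤ Nat.card (Quotient s') + 1 := by
    apply nat_card_le_of_almost_inj g (Quotient.mk s u)
    intro x y hx hy hxy
    induction x using Quotient.ind
    induction y using Quotient.ind
    rename_i a b
    have hab : Relation.EqvGen R' a b := Quotient.exact hxy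
    rcases key a b hab with h | ⟨h1, h2⟩ | ⟨h1, h2⟩
    · exact Quotient.sound h
    · exact absurd (Quotient.sound h1) hx
    · exact absurd (Quotient.sound (Relation.EqvGen.symm _ _ h2)) hy
  exact this

open scoped Classical
open Finset

noncomputable def erw {ι : Type*} [DecidableEq ι] (E : Finset ι) (r : ι → ℝ)
    (A : Finset ι) : ℝ :=
  (∏ e ∈ A, r e) * ∏ e ∈ E \ A, (1 - r e)

lemma erw_insert_mem {ι : Type*} [DecidableEq ι] {E' A : Finset ι} {r : ι → ℝ} {e : ι}
    (he : e ∉ E') (hA : e ∈ A) :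
    erw (insert e E') r A = r e * erw E' r (A.erase e) := by
  unfold erw
  rw [← Finset.mul_prod_erase A r hA, Finset.insert_sdiff_of_mem _ hA]
  have : E' \ A = E' \ A.erase e := by
    ext x
    simp only [Finset.mem_sdiff, Finset.mem_erase]
    constructor
    · rintro ⟨h1, h2⟩; exact ⟨h1, fun h => h2 h.2⟩
    · rintro ⟨h1, h2⟩; refine ⟨h1, fun h => h2 ⟨fun he' => he (he' ▸ h1), h⟩⟩
  rw [this]; ring

lemma erw_insert_not_mem {ι : Type*} [DecidableEq ι] {E' A : Finset ι} {r : ι → ℝ} {e : ι}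
    (he : e ∉ E') (hA : e ∉ A) :
    erw (insert e E') r A = (1 - r e) * erw E' r A := by
  unfold erw
  rw [Finset.insert_sdiff_of_notMem _ hA, Finset.prod_insert (fun h => he (Finset.mem_sdiff.mp h).1)]
  ring

lemma coupling_exists {ι : Type*} [DecidableEq ι] (E : Finset ι) :
    ∀ (r : ι → ℝ) (ν : Finset ι → ℝ), (∀ e ∈ E, 0 ≤ r e ∧ r e ≤ 1) → (∀ S, 0 ≤ ν S) →
    (∀ S, ν S ≠ 0 → S ⊆ E) →
    (∀ e ∈ E, ∀ S ⊆ E.erase e, r e * (ν S + ν (insert e S)) ≤ ν (insert e S)) →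
    ∃ μ : Finset ι → Finset ι → ℝ,
      (∀ A B, 0 ≤ μ A B) ∧
      (∀ A B, μ A B ≠ 0 → A ⊆ B ∧ B ⊆ E) ∧
      (∀ A ∈ E.powerset, ∑ B ∈ E.powerset, μ A B = erw E r A * ∑ S ∈ E.powerset, ν S) ∧
      (∀ B ∈ E.powerset, ∑ A ∈ E.powerset, μ A B = ν B) := by
  induction E using Finset.induction_on with
  | empty =>
    intro r ν hr hν hsupp hcond
    refine ⟨fun A B => if A = ∅ ∧ B = ∅ then ν ∅ else 0, ?_, ?_, ?_, ?_⟩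
    · intro A B; dsimp only; split
      · exact hν ∅
      · exact le_refl 0
    · intro A B h
      dsimp only at h
      by_cases hc : A = ∅ ∧ B = ∅
      · exact ⟨hc.1 ▸ hc.2 ▸ Finset.Subset.refl _, hc.2 ▸ Finset.Subset.refl _⟩
      · simp [hc] at h
    · intro A hA
      rw [Finset.powerset_empty] at hA ⊢
      simp only [Finset.mem_singleton] at hA
      subst hA
      simp [erw]
    · intro B hB
      rw [Finset.powerset_empty] at hB ⊢
      simp only [Finset.mem_singleton] at hB
      subst hB
      simp
  | @insert e E' he ih =>
    intro r ν hr hν hsupp hcond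
    set ν1 : Finset ι → ℝ := fun S => if e ∈ S then 0 else ν (insert e S) with hν1def
    set ν0 : Finset ι → ℝ := fun S => if e ∈ S then 0 else ν S with hν0def
    set t1 : ℝ := ∑ S ∈ E'.powerset, ν1 S with ht1def
    set t0 : ℝ := ∑ S ∈ E'.powerset, ν0 S with ht0def
    set T : ℝ := ∑ S ∈ (insert e E').powerset, ν S with hTdef
    have hre := hr e (Finset.mem_insert_self e E')
    -- powerset members of E' do not contain e
    have hnot : ∀ S ∈ E'.powerset, e ∉ S := fun S hS hmem =>
      he (Finset.mem_powerset.mp hS hmem)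
    have hT : T = t0 + t1 := by
      rw [hTdef, Finset.sum_powerset_insert he]
      congr 1
      · exact (Finset.sum_congr rfl (fun S hS => by simp [hν0def, hnot S hS])).symm
      · exact (Finset.sum_congr rfl (fun S hS => by simp [hν1def, hnot S hS])).symm
    have ht1 : 0 ≤ t1 := Finset.sum_nonneg fun S _ => by
      by_cases h : e ∈ S <;> simp [hν1def, h, hν]
    have ht0 : 0 ≤ t0 := Finset.sum_nonneg fun S _ => by
      by_cases h : e ∈ S <;> simp [hν0def, h, hν]
    have hTnn : 0 ≤ T := hT ▸ add_nonneg ht0 ht1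
    have hrT : r e * T ≤ t1 := by
      have h1 : ∀ S ∈ E'.powerset, r e * (ν0 S + ν1 S) ≤ ν1 S := by
        intro S hS
        have hS' : S ⊆ (insert e E').erase e := by
          rw [Finset.erase_insert he]; exact Finset.mem_powerset.mp hS
        have := hcond e (Finset.mem_insert_self e E') S hS'
        simpa [hν0def, hν1def, hnot S hS] using this
      calc r e * T = ∑ S ∈ E'.powerset, r e * (ν0 S + ν1 S) := by
            rw [hT, ← Finset.sum_add_distrib, ← Finset.mul_sum]
        _ ≤ ∑ S ∈ E'.powerset, ν1 S := Finset.sum_le_sum h1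
        _ = t1 := rfl
    have hr' : ∀ f ∈ E', 0 ≤ r f ∧ r f ≤ 1 := fun f hf => hr f (Finset.mem_insert_of_mem hf)
    have hν1 : ∀ S, 0 ≤ ν1 S := fun S => by
      by_cases h : e ∈ S <;> simp [hν1def, h, hν]
    have hν0 : ∀ S, 0 ≤ ν0 S := fun S => by
      by_cases h : e ∈ S <;> simp [hν0def, h, hν]
    have hsupp1 : ∀ S, ν1 S ≠ 0 → S ⊆ E' := by
      intro S hS
      by_cases h : e ∈ S
      · simp [hν1def, h] at hS
      · simp only [hν1def, h, if_false] at hS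
        have := hsupp _ hS
        intro x hx
        rcases Finset.mem_insert.mp (this (Finset.mem_insert_of_mem hx)) with rfl | hx'
        · exact absurd hx h
        · exact hx'
    have hsupp0 : ∀ S, ν0 S ≠ 0 → S ⊆ E' := by
      intro S hS
      by_cases h : e ∈ S
      · simp [hν0def, h] at hS
      · simp only [hν0def, h, if_false] at hS
        have := hsupp _ hS
        intro x hx
        rcases Finset.mem_insert.mp (this hx) with rfl | hx'
        · exact absurd hx h
        · exact hx'
    have hcond1 : ∀ f ∈ E', ∀ S ⊆ E'.erase f, r f * (ν1 S + ν1 (insert f S)) ≤ ν1 (insert f S) := by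
      intro f hf S hS
      have hef : e ≠ f := fun h => he (h ▸ hf)
      have heS : e ∉ S := fun h => he (Finset.mem_of_mem_erase (hS h))
      have hefS : e ∉ insert f S := by
        simp only [Finset.mem_insert]; rintro (rfl | h); exact hef rfl; exact heS h
      have hsub : insert e S ⊆ (insert e E').erase f := by
        rw [Finset.erase_insert_of_ne hef]
        exact Finset.insert_subset_insert e hS
      have := hcond f (Finset.mem_insert_of_mem hf) (insert e S) hsub
      rw [Finset.insert_comm] at this
      simpa [hν1def, heS, hefS] using this
    have hcond0 : ∀ f ∈ E', ∀ S ⊆ E'.erase f, r f * (ν0 S + ν0 (insert f S)) ≤ ν0 (insert f S) := by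
      intro f hf S hS
      have hef : e ≠ f := fun h => he (h ▸ hf)
      have heS : e ∉ S := fun h => he (Finset.mem_of_mem_erase (hS h))
      have hefS : e ∉ insert f S := by
        simp only [Finset.mem_insert]; rintro (rfl | h); exact hef rfl; exact heS h
      have hsub : S ⊆ (insert e E').erase f := by
        rw [Finset.erase_insert_of_ne hef]
        exact hS.trans (Finset.subset_insert e _)
      have := hcond f (Finset.mem_insert_of_mem hf) S hsub
      simpa [hν0def, heS, hefS] using this
    obtain ⟨μ1, hμ1nn, hμ1supp, hμ1A, hμ1B⟩ := ih r ν1 hr' hν1 hsupp1 hcond1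
    obtain ⟨μ0, hμ0nn, hμ0supp, hμ0A, hμ0B⟩ := ih r ν0 hr' hν0 hsupp0 hcond0
    set α : ℝ := if t1 = 0 then 0 else r e * T / t1 with hαdef
    have hα0 : 0 ≤ α := by
      rw [hαdef]; split
      · exact le_refl 0
      · exact div_nonneg (mul_nonneg hre.1 hTnn) ht1
    have hα1 : α ≤ 1 := by
      rw [hαdef]; split
      · exact zero_le_one
      · rename_i h
        rw [div_le_one (lt_of_le_of_ne ht1 (Ne.symm h))]
        exact hrT
    have hαt1 : α * t1 = r e * T := by
      rw [hαdef]; split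
      · rename_i h
        have h2 : r e * T ≤ 0 := h ▸ hrT
        have h3 : 0 ≤ r e * T := mul_nonneg hre.1 hTnn
        rw [h, mul_zero]; linarith
      · rename_i h
        field_simp
    refine ⟨fun A B =>
      if e ∈ A then (if e ∈ B then α * μ1 (A.erase e) (B.erase e) else 0)
      else (if e ∈ B then (1 - α) * μ1 A (B.erase e) else μ0 A B), ?_, ?_, ?_, ?_⟩
    · intro A B
      by_cases hA : e ∈ A <;> by_cases hB : e ∈ B <;> simp only [hA, hB, if_true, if_false]
      · exact mul_nonneg hα0 (hμ1nn _ _)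
      · exact le_refl 0
      · exact mul_nonneg (by linarith) (hμ1nn _ _)
      · exact hμ0nn _ _
    · intro A B h
      by_cases hA : e ∈ A <;> by_cases hB : e ∈ B <;> simp only [hA, hB, if_true, if_false] at h
      · have h1 := hμ1supp _ _ (by intro h'; rw [h', mul_zero] at h; exact h rfl)
        constructor
        · intro x hx
          by_cases hxe : x = e
          · exact hxe ▸ hB
          · exact Finset.mem_of_mem_erase (h1.1 (Finset.mem_erase.mpr ⟨hxe, hx⟩))
        · calc B = insert e (B.erase e) := (Finset.insert_erase hB).symm
            _ ⊆ insert e E' := Finset.insert_subset_insert e h1.2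
      · exact absurd rfl h
      · have h1 := hμ1supp _ _ (by intro h'; rw [h', mul_zero] at h; exact h rfl)
        refine ⟨h1.1.trans (Finset.erase_subset e B), ?_⟩
        calc B = insert e (B.erase e) := (Finset.insert_erase hB).symm
          _ ⊆ insert e E' := Finset.insert_subset_insert e h1.2
      · have h1 := hμ0supp _ _ h
        exact ⟨h1.1, h1.2.trans (Finset.subset_insert e E')⟩
    · intro A hA
      rw [Finset.sum_powerset_insert he]
      by_cases hAe : e ∈ A
      · have hA' : A.erase e ∈ E'.powerset := by
          rw [Finset.mem_powerset]
          have := Finset.erase_subset_erase e (Finset.mem_powerset.mp hA)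
          rwa [Finset.erase_insert he] at this
        have s1 : ∑ B ∈ E'.powerset, (if e ∈ A then (if e ∈ B then α * μ1 (A.erase e) (B.erase e) else 0)
            else (if e ∈ B then (1 - α) * μ1 A (B.erase e) else μ0 A B)) = 0 := by
          apply Finset.sum_eq_zero
          intro B hB
          simp [hAe, hnot B hB]
        have s2 : ∑ B ∈ E'.powerset, (if e ∈ A then (if e ∈ insert e B then α * μ1 (A.erase e) ((insert e B).erase e) else 0)
            else (if e ∈ insert e B then (1 - α) * μ1 A ((insert e B).erase e) else μ0 A (insert e B)))
            = α * (erw E' r (A.erase e) * t1) := by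
          rw [← hμ1A _ hA', Finset.mul_sum]
          apply Finset.sum_congr rfl
          intro B hB
          simp [hAe, Finset.mem_insert_self, Finset.erase_insert (hnot B hB)]
        rw [s1, s2, zero_add, erw_insert_mem he hAe]
        linear_combination erw E' r (A.erase e) * hαt1
      · have hA' : A ∈ E'.powerset := by
          rw [Finset.mem_powerset]
          intro x hx
          rcases Finset.mem_insert.mp (Finset.mem_powerset.mp hA hx) with rfl | h
          · exact absurd hx hAe
          · exact h
        have s1 : ∑ B ∈ E'.powerset, (if e ∈ A then (if e ∈ B then α * μ1 (A.erase e) (B.erase e) else 0)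
            else (if e ∈ B then (1 - α) * μ1 A (B.erase e) else μ0 A B))
            = erw E' r A * t0 := by
          rw [← hμ0A _ hA']
          apply Finset.sum_congr rfl
          intro B hB
          simp [hAe, hnot B hB]
        have s2 : ∑ B ∈ E'.powerset, (if e ∈ A then (if e ∈ insert e B then α * μ1 (A.erase e) ((insert e B).erase e) else 0)
            else (if e ∈ insert e B then (1 - α) * μ1 A ((insert e B).erase e) else μ0 A (insert e B)))
            = (1 - α) * (erw E' r A * t1) := by
          rw [← hμ1A _ hA', Finset.mul_sum]
          apply Finset.sum_congr rfl
          intro B hB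
          simp [hAe, Finset.mem_insert_self, Finset.erase_insert (hnot B hB)]
        rw [s1, s2, erw_insert_not_mem he hAe]
        linear_combination (-(erw E' r A)) * hαt1 - erw E' r A * hT
    · intro B hB
      rw [Finset.sum_powerset_insert he]
      by_cases hBe : e ∈ B
      · have hB' : B.erase e ∈ E'.powerset := by
          rw [Finset.mem_powerset]
          have := Finset.erase_subset_erase e (Finset.mem_powerset.mp hB)
          rwa [Finset.erase_insert he] at this
        have s1 : ∑ A ∈ E'.powerset, (if e ∈ A then (if e ∈ B then α * μ1 (A.erase e) (B.erase e) else 0)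
            else (if e ∈ B then (1 - α) * μ1 A (B.erase e) else μ0 A B))
            = (1 - α) * ν1 (B.erase e) := by
          rw [← hμ1B _ hB', Finset.mul_sum]
          apply Finset.sum_congr rfl
          intro A hA
          simp [hnot A hA, hBe]
        have s2 : ∑ A ∈ E'.powerset, (if e ∈ insert e A then (if e ∈ B then α * μ1 ((insert e A).erase e) (B.erase e) else 0)
            else (if e ∈ B then (1 - α) * μ1 (insert e A) (B.erase e) else μ0 (insert e A) B))
            = α * ν1 (B.erase e) := by
          rw [← hμ1B _ hB', Finset.mul_sum]
          apply Finset.sum_congr rfl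
          intro A hA
          simp [Finset.mem_insert_self, hBe, Finset.erase_insert (hnot A hA)]
        rw [s1, s2]
        have hv : ν1 (B.erase e) = ν B := by
          simp only [hν1def, Finset.notMem_erase, if_false, Finset.insert_erase hBe]
        rw [hv]; ring
      · have s1 : ∑ A ∈ E'.powerset, (if e ∈ A then (if e ∈ B then α * μ1 (A.erase e) (B.erase e) else 0)
            else (if e ∈ B then (1 - α) * μ1 A (B.erase e) else μ0 A B))
            = ν B := by
          have hB' : B ∈ E'.powerset := by
            rw [Finset.mem_powerset]
            intro x hx
            rcases Finset.mem_insert.mp (Finset.mem_powerset.mp hB hx) with rfl | h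
            · exact absurd hx hBe
            · exact h
          rw [← show ν0 B = ν B by simp [hν0def, hBe]]
          rw [← hμ0B _ hB']
          apply Finset.sum_congr rfl
          intro A hA
          simp [hnot A hA, hBe]
        have s2 : ∑ A ∈ E'.powerset, (if e ∈ insert e A then (if e ∈ B then α * μ1 ((insert e A).erase e) (B.erase e) else 0)
            else (if e ∈ B then (1 - α) * μ1 (insert e A) (B.erase e) else μ0 (insert e A) B))
            = 0 := by
          apply Finset.sum_eq_zero
          intro A hA
          simp [Finset.mem_insert_self, hBe]
        rw [s1, s2, add_zero]
theorem er_dominated_by_rc {V : Type*} [Fintype V] [DecidableEq V]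
    (E : Finset (Finset V)) (hE : ∀ e ∈ E, e.card = 2)
    (p : Finset V → ℝ) (hp : ∀ e ∈ E, 0 ≤ p e ∧ p e ≤ 1) (q : ℝ) (hq : 1 ≤ q) :
    let w : Finset (Finset V) → ℝ := fun A =>
      q ^ kappa A * (∏ e ∈ A, p e) * ∏ e ∈ E \ A, (1 - p e)
    let Z : ℝ := ∑ A ∈ E.powerset, w A
    let er : Finset (Finset V) → ℝ := fun A =>
      (∏ e ∈ A, (p e / q)) * ∏ e ∈ E \ A, (1 - p e / q)
    ∃ μ : Finset (Finset V) → Finset (Finset V) → ℝ,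
      (∀ A B, 0 ≤ μ A B) ∧
      (∀ A B, μ A B ≠ 0 → A ∈ E.powerset ∧ B ∈ E.powerset ∧ A ⊆ B) ∧
      (∀ A ∈ E.powerset, ∑ B ∈ E.powerset, μ A B = er A) ∧
      (∀ B ∈ E.powerset, ∑ A ∈ E.powerset, μ A B = w B / Z) := by
  intro w Z er
  have hq0 : (0 : ℝ) < q := lt_of_lt_of_le one_pos hq
  -- nonnegativity of weights
  have hwnn : ∀ A ∈ E.powerset, 0 ≤ w A := by
    intro A hA
    have hA' := Finset.mem_powerset.mp hA
    refine mul_nonneg (mul_nonneg (pow_nonneg hq0.le _) ?_) ?_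
    · exact Finset.prod_nonneg fun f hf => (hp f (hA' hf)).1
    · exact Finset.prod_nonneg fun f hf => by
        have := (hp f (Finset.mem_sdiff.mp hf).1).2; linarith
  -- Z is positive
  have hZ : 0 < Z := by
    have hmem : E.filter (fun f => 0 < p f) ∈ E.powerset :=
      Finset.mem_powerset.mpr (Finset.filter_subset _ _)
    refine Finset.sum_pos' hwnn ⟨E.filter (fun f => 0 < p f), hmem, ?_⟩
    refine mul_pos (mul_pos (pow_pos hq0 _) ?_) ?_
    · exact Finset.prod_pos fun f hf => (Finset.mem_filter.mp hf).2
    · refine Finset.prod_pos fun f hf => ?_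
      obtain ⟨hfE, hfn⟩ := Finset.mem_sdiff.mp hf
      have : ¬ 0 < p f := fun h => hfn (Finset.mem_filter.mpr ⟨hfE, h⟩)
      have := (hp f hfE).1
      have h0 : p f = 0 := le_antisymm (not_lt.mp ‹¬ 0 < p f›) this
      rw [h0]; norm_num
  set r : Finset V → ℝ := fun e => p e / q with hrdef
  set ν : Finset (Finset V) → ℝ := fun S => if S ∈ E.powerset then w S / Z else 0 with hνdef
  have hr : ∀ e ∈ E, 0 ≤ r e ∧ r e ≤ 1 := by
    intro e heE
    constructor
    · exact div_nonneg (hp e heE).1 hq0.le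
    · rw [div_le_one hq0]; exact (hp e heE).2.trans hq
  have hν : ∀ S, 0 ≤ ν S := by
    intro S
    rw [hνdef]; dsimp only; split
    · exact div_nonneg (hwnn S ‹_›) hZ.le
    · exact le_refl 0
  have hsupp : ∀ S, ν S ≠ 0 → S ⊆ E := by
    intro S hS
    rw [hνdef] at hS; dsimp only at hS
    by_cases h : S ∈ E.powerset
    · exact Finset.mem_powerset.mp h
    · simp [h] at hS
  have hcond : ∀ e ∈ E, ∀ S ⊆ E.erase e, r e * (ν S + ν (insert e S)) ≤ ν (insert e S) := by
    intro e heE S hS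
    have heS : e ∉ S := fun h => (Finset.notMem_erase e E) (hS h)
    have hSE : S ⊆ E := hS.trans (Finset.erase_subset e E)
    have hSeE : insert e S ⊆ E := Finset.insert_subset heE hSE
    have hSp : S ∈ E.powerset := Finset.mem_powerset.mpr hSE
    have hSep : insert e S ∈ E.powerset := Finset.mem_powerset.mpr hSeE
    rw [hνdef]; dsimp only
    rw [if_pos hSp, if_pos hSep]
    have key : r e * (w S + w (insert e S)) ≤ w (insert e S) := by
      set c : ℝ := (∏ f ∈ S, p f) * ∏ f ∈ E \ insert e S, (1 - p f) with hcdef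
      have hc : 0 ≤ c := by
        refine mul_nonneg (Finset.prod_nonneg fun f hf => (hp f (hSE hf)).1)
          (Finset.prod_nonneg fun f hf => ?_)
        have := (hp f (Finset.mem_sdiff.mp hf).1).2; linarith
      have hwS : w S = q ^ kappa S * ((1 - p e) * c) := by
        show q ^ kappa S * (∏ f ∈ S, p f) * ∏ f ∈ E \ S, (1 - p f) = _
        have he1 : e ∈ E \ S := Finset.mem_sdiff.mpr ⟨heE, heS⟩
        rw [← Finset.mul_prod_erase (E \ S) _ he1, ← Finset.sdiff_insert E S e]
        rw [hcdef]; ring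
      have hwSe : w (insert e S) = q ^ kappa (insert e S) * (p e * c) := by
        show q ^ kappa (insert e S) * (∏ f ∈ insert e S, p f) * ∏ f ∈ E \ insert e S, (1 - p f) = _
        rw [Finset.prod_insert heS, hcdef]; ring
      rw [hwS, hwSe, hrdef]; dsimp only
      have hkey : q ^ kappa S ≤ q * q ^ kappa (insert e S) := by
        have h1 : kappa S ≤ kappa (insert e S) + 1 := kappa_le_insert S e (hE e heE)
        calc q ^ kappa S ≤ q ^ (kappa (insert e S) + 1) := pow_le_pow_right₀ hq h1
          _ = q * q ^ kappa (insert e S) := by rw [pow_succ]; ring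
      set a : ℝ := q ^ kappa S
      set b : ℝ := q ^ kappa (insert e S)
      have hb : 0 ≤ b := pow_nonneg hq0.le _
      have hpe0 := (hp e heE).1
      have hpe1 := (hp e heE).2
      rw [div_mul_eq_mul_div, div_le_iff₀ hq0]
      have h1 : p e * ((1 - p e) * c) * a ≤ p e * ((1 - p e) * c) * (q * b) :=
        mul_le_mul_of_nonneg_left hkey
          (mul_nonneg hpe0 (mul_nonneg (by linarith) hc))
      have h2 : p e ^ 2 * b * c ≤ p e ^ 2 * b * c * q :=
        le_mul_of_one_le_right (mul_nonneg (mul_nonneg (sq_nonneg _) hb) hc) hq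
      nlinarith [h1, h2]
    calc r e * (w S / Z + w (insert e S) / Z)
        = r e * (w S + w (insert e S)) / Z := by ring
      _ ≤ w (insert e S) / Z := (div_le_div_iff_of_pos_right hZ).mpr key
  obtain ⟨μ, hμnn, hμsupp, hμA, hμB⟩ := coupling_exists E r ν hr hν hsupp hcond
  refine ⟨μ, hμnn, ?_, ?_, ?_⟩
  · intro A B h
    obtain ⟨h1, h2⟩ := hμsupp A B h
    exact ⟨Finset.mem_powerset.mpr (h1.trans h2), Finset.mem_powerset.mpr h2, h1⟩
  · intro A hA
    rw [hμA A hA]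
    have hsum : ∑ S ∈ E.powerset, ν S = 1 := by
      rw [hνdef]
      rw [Finset.sum_congr rfl (fun S hS => if_pos hS)]
      rw [← Finset.sum_div]
      exact div_self hZ.ne'
    rw [hsum, mul_one]
    rfl
  · intro B hB
    rw [hμB B hB, hνdef]
    dsimp only
    rw [if_pos hB]
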